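/- Let b, c, λ, ρ ∈ ℂ with Re(ρ) > 0, let z > 0 be real, and let t ∈ ℂ with t ≠ 0. Then the two generating-function identities hold: (i) the family (g_{n-1/2}^{(b,c+1/2)}(z;ρ) · t^n)_{n∈ℤ} is summable and Σ_{n∈ℤ} g_{n-1/2}^{(b,c+1/2)}(z;ρ) t^n = √(π/(2z)) · Σ_{m=0}^∞ (c;ρ)_m ((t - b/t)·z/2)^m/(m!)²; (ii) the family (C_n^{(b,λ)}(z;ρ) · t^n)_{n∈ℤ} is summable and Σ_{n∈ℤ} C_n^{(b,λ)}(z;ρ) t^n = Σ_{m=0}^∞ (λ;ρ)_m (t - bz/t)^m/(m!)². -/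

import Mathlib

open Complex MeasureTheory Real Set

/-- Extended Gamma function `Γ_ρ(x) = ∫_0^∞ t^(x-1) e^(-t-ρ/t) dt`. -/
noncomputable def extGamma (ρ x : ℂ) : ℂ :=
  ∫ t in Ioi (0:ℝ), (t:ℂ) ^ (x - 1) * Complex.exp (-(t:ℂ) - ρ / (t:ℂ))

/-- Generalized Pochhammer symbol `(c;ρ)_μ = Γ_ρ(c+μ)/Γ(c)`. -/
noncomputable def genPoch (c ρ μ : ℂ) : ℂ := extGamma ρ (c + μ) / Complex.Gamma c

/-- Unified four parameter Bessel function `G_ν^{(b,c)}(z;ρ)` with complex order,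
powers being principal complex powers. -/
noncomputable def unifiedG (b c ν ρ z : ℂ) : ℂ :=
  ∑' k : ℕ, (-b) ^ k * genPoch c ρ (2 * (k:ℂ) + ν) * (z / 2) ^ (2 * (k:ℂ) + ν) /
    ((k.factorial : ℂ) * Complex.Gamma (ν + (k:ℂ) + 1) * Complex.Gamma (ν + 2 * (k:ℂ) + 1))

/-- Unified four parameter Bessel function with integer order, powers being integer powers. -/
noncomputable def unifiedGInt (b c ρ : ℂ) (ν : ℤ) (z : ℂ) : ℂ :=
  ∑' k : ℕ, (-b) ^ k * genPoch c ρ (2 * (k:ℂ) + (ν:ℂ)) * (z / 2) ^ (2 * (k:ℤ) + ν) /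
    ((k.factorial : ℂ) * Complex.Gamma ((ν:ℂ) + (k:ℂ) + 1) * Complex.Gamma ((ν:ℂ) + 2 * (k:ℂ) + 1))

/-- Pochhammer symbol `(a)_k = Γ(a+k)/Γ(a)`. -/
noncomputable def poch (a : ℂ) (k : ℕ) : ℂ := Complex.Gamma (a + (k:ℂ)) / Complex.Gamma a

/-- Generalized hypergeometric function `₀F₃`. -/
noncomputable def hyp0F3 (a₁ a₂ a₃ w : ℂ) : ℂ :=
  ∑' k : ℕ, w ^ k / (poch a₁ k * poch a₂ k * poch a₃ k * (k.factorial : ℂ))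

/-- Generalized hypergeometric function `₂F₃`. -/
noncomputable def hyp2F3 (a₁ a₂ b₁ b₂ b₃ w : ℂ) : ℂ :=
  ∑' k : ℕ, poch a₁ k * poch a₂ k * w ^ k /
    (poch b₁ k * poch b₂ k * poch b₃ k * (k.factorial : ℂ))

/-- Bessel function of the first kind `J_μ(z)` for real `z > 0`. -/
noncomputable def besselJ (μ : ℂ) (z : ℝ) : ℂ :=
  ∑' k : ℕ, (-1) ^ k * ((z:ℂ) / 2) ^ (2 * (k:ℂ) + μ) /
    ((k.factorial : ℂ) * Complex.Gamma (μ + (k:ℂ) + 1))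

/-- Generalized four parameter spherical Bessel function
`g_ν^{(b,c)}(z;ρ) = √(π/(2z)) · G_{ν+1/2}^{(b,c-1/2)}(z;ρ)`. -/
noncomputable def sphG (b c ν ρ : ℂ) (z : ℝ) : ℂ :=
  (Real.sqrt (π / (2 * z)) : ℂ) * unifiedG b (c - 1/2) (ν + 1/2) ρ (z:ℂ)

/-- Generalized four parameter Bessel-Clifford function
`C_ν^{(b,λ)}(z;ρ) = z^{-ν/2} · G_ν^{(b,λ)}(2√z;ρ)` for real `z > 0`. -/
noncomputable def cliffC (b lam ν ρ : ℂ) (z : ℝ) : ℂ :=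
  (z:ℂ) ^ (-ν / 2) * unifiedG b lam ν ρ ((2 * Real.sqrt z : ℝ) : ℂ)

set_option maxHeartbeats 1000000 in
lemma my_summable_gamma (a : ℝ) {R : ℝ} (hR : 0 ≤ R) :
    Summable (fun M : ℕ => Real.Gamma (a + M) * R ^ M / ((M.factorial : ℝ))^2) := by
  apply summable_of_ratio_norm_eventually_le (r := 1/2) (by norm_num)
  rw [Filter.eventually_atTop]
  refine ⟨⌈|a|⌉₊ + ⌈4*R⌉₊ + 1, fun M hM => ?_⟩
  have hc1 : (⌈|a|⌉₊:ℝ) ≤ (M:ℝ) - 1 := by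
    have : ⌈|a|⌉₊ + 1 ≤ M := by omega
    have := (Nat.cast_le (α := ℝ)).2 this
    push_cast at this; linarith
  have hc2 : (⌈4*R⌉₊:ℝ) ≤ (M:ℝ) := by
    exact_mod_cast Nat.le_of_lt_succ (by omega : ⌈4*R⌉₊ < M + 1)
  have haM : |a| ≤ (M:ℝ) - 1 := le_trans (Nat.le_ceil _) hc1
  have hRM : 4*R ≤ (M:ℝ) + 1 := le_trans (Nat.le_ceil _) (by linarith)
  have hM1 : (1:ℝ) ≤ M := by
    have := abs_nonneg a; linarith
  have hpos : (0:ℝ) < a + M := by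
    have := abs_le.1 haM; linarith
  have key : Real.Gamma (a + ↑(M+1)) * R ^ (M+1) / ((M+1).factorial : ℝ)^2
      = ((a+M)*R/(M+1)^2) * (Real.Gamma (a + M) * R ^ M / ((M.factorial : ℝ))^2) := by
    have h1 : a + ((M:ℝ)+1) = (a + M) + 1 := by ring
    rw [Nat.factorial_succ]
    push_cast
    rw [h1, Real.Gamma_add_one hpos.ne']
    field_simp
    ring
  have hfrac : (a+M)*R/(M+1)^2 ≤ 1/2 := by
    have h1 : (a+M)*R ≤ 2*M*R := by
      have := abs_le.1 haM
      nlinarith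
    have h2 : 4*M*R ≤ M*(M+1) := by nlinarith
    rw [div_le_iff₀ (by positivity)]
    nlinarith
  have hf : (0:ℝ) ≤ Real.Gamma (a + M) * R ^ M / ((M.factorial : ℝ))^2 := by
    have := Real.Gamma_pos_of_pos hpos
    positivity
  rw [Real.norm_eq_abs, Real.norm_eq_abs]
  push_cast
  push_cast at key
  rw [key, _root_.abs_of_nonneg hf, _root_.abs_of_nonneg (by positivity)]
  exact mul_le_mul_of_nonneg_right hfrac hf

lemma my_zpow_le {x : ℝ} (hx : 0 < x) {e : ℤ} {M : ℕ} (h1 : -(M:ℤ) ≤ e) (h2 : e ≤ M) :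
    x ^ e ≤ (max x x⁻¹) ^ M := by
  set T := max x x⁻¹ with hT
  have hxT : x ≤ T := le_max_left _ _
  have hxT' : x⁻¹ ≤ T := le_max_right _ _
  have hT0 : 0 < T := lt_of_lt_of_le hx hxT
  have hT1 : (1:ℝ) ≤ T := by
    rcases le_total 1 x with h | h
    · exact le_trans h hxT
    · exact le_trans ((one_le_inv₀ hx).2 h) hxT'
  rcases le_or_gt 0 e with he | he
  · obtain ⟨n, rfl⟩ := Int.eq_ofNat_of_zero_le he
    have hn : n ≤ M := by exact_mod_cast h2
    calc x ^ (n:ℤ) = x ^ n := zpow_natCast x n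
      _ ≤ T ^ n := pow_le_pow_left₀ hx.le hxT n
      _ ≤ T ^ M := pow_le_pow_right₀ hT1 hn
  · obtain ⟨n, rfl⟩ : ∃ n : ℕ, e = -(n:ℤ) := ⟨(-e).toNat, by omega⟩
    have hn : n ≤ M := by omega
    calc x ^ (-(n:ℤ)) = (x⁻¹) ^ n := by rw [zpow_neg, ← inv_zpow, zpow_natCast]
      _ ≤ T ^ n := pow_le_pow_left₀ (by positivity) hxT' n
      _ ≤ T ^ M := pow_le_pow_right₀ hT1 hn

lemma my_binom (u : ℂ) {t : ℂ} (ht : t ≠ 0) (M : ℕ) :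
    (t + u/t)^M = ∑ k ∈ Finset.range (M+1), (M.choose k : ℂ) * u^k * t^((M:ℤ) - 2*k) := by
  rw [add_comm t (u/t), add_pow]
  refine Finset.sum_congr rfl fun k hk => ?_
  have hkM : k ≤ M := Nat.lt_succ_iff.1 (Finset.mem_range.1 hk)
  have h1 : t ^ ((M:ℤ) - 2*k) = t ^ (((M - k : ℕ)):ℤ) * t ^ (-(k:ℤ)) := by
    rw [← zpow_add₀ ht]; congr 1; omega
  rw [h1, zpow_natCast, zpow_neg, zpow_natCast, div_pow]
  field_simp

lemma my_extGamma_norm_le {ρ x : ℂ} (hρ : 0 < ρ.re) (hx : 0 < x.re) :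
    ‖extGamma ρ x‖ ≤ Real.Gamma x.re := by
  rw [extGamma, Real.Gamma_eq_integral hx]
  refine norm_integral_le_of_norm_le (Real.GammaIntegral_convergent hx) ?_
  filter_upwards [ae_restrict_mem measurableSet_Ioi] with s hs
  have hs' : (0:ℝ) < s := hs
  rw [norm_mul]
  have h1 : ‖(s:ℂ) ^ (x - 1)‖ = s ^ (x.re - 1) := by
    rw [Complex.norm_cpow_eq_rpow_re_of_pos hs']
    norm_num
  have h2 : ‖Complex.exp (-(s:ℂ) - ρ / s)‖ ≤ Real.exp (-s) := by
    rw [Complex.norm_exp]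
    apply Real.exp_le_exp.2
    have h3 : (-(s:ℂ) - ρ / s).re = -s - ρ.re / s := by
      simp [Complex.sub_re, Complex.div_ofReal_re]
    rw [h3]
    have : 0 < ρ.re / s := div_pos hρ hs'
    linarith
  calc ‖(s:ℂ) ^ (x - 1)‖ * ‖Complex.exp (-(s:ℂ) - ρ / s)‖
      ≤ s ^ (x.re - 1) * Real.exp (-s) := by
        rw [h1]; exact mul_le_mul_of_nonneg_left h2 (Real.rpow_nonneg hs'.le _)
    _ = Real.exp (-s) * s ^ (x.re - 1) := mul_comm _ _

lemma my_genPoch_norm_le {c ρ : ℂ} (hρ : 0 < ρ.re) {M : ℕ} (h : 0 < c.re + M) :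
    ‖genPoch c ρ (M:ℂ)‖ ≤ Real.Gamma (c.re + M) / ‖Complex.Gamma c‖ := by
  rw [genPoch, norm_div]
  rcases eq_or_lt_of_le (norm_nonneg (Complex.Gamma c)) with h0 | h0
  · rw [← h0, div_zero, div_zero]
  · rw [div_le_div_iff_of_pos_right h0]
    have hre : 0 < (c + (M:ℂ)).re := by
      simpa [Complex.add_re] using h
    have := my_extGamma_norm_le hρ hre
    simpa [Complex.add_re] using this

lemma my_gamma_int_neg {m : ℤ} (hm : m < 0) : Complex.Gamma ((m:ℂ) + 1) = 0 := by
  obtain ⟨n, rfl⟩ : ∃ n:ℕ, m = -((n:ℤ)+1) := ⟨(-1-m).toNat, by omega⟩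
  have : ((-((n:ℤ)+1):ℤ):ℂ) + 1 = -(n:ℂ) := by push_cast; ring
  rw [this]
  exact Complex.Gamma_neg_nat_eq_zero n

lemma my_gamma_sub_neg {m : ℤ} {k : ℕ} (hm : 0 ≤ m) (hk : m < k) :
    Complex.Gamma ((m:ℂ) - (k:ℕ) + 1) = 0 := by
  obtain ⟨n, hn⟩ : ∃ n:ℕ, m - k = -((n:ℤ)+1) := ⟨(k - 1 - m).toNat, by omega⟩
  have : (m:ℂ) - (k:ℕ) + 1 = -(n:ℂ) := by
    have : ((m - (k:ℤ) : ℤ):ℂ) = ((-((n:ℤ)+1):ℤ):ℂ) := by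
      exact congrArg (fun x : ℤ => (x:ℂ)) hn
    push_cast at this
    push_cast
    linear_combination this
  rw [this]
  exact Complex.Gamma_neg_nat_eq_zero n

set_option maxHeartbeats 2000000 in
lemma my_core (c ρ : ℂ) (hρ : 0 < ρ.re) (w t : ℂ) (ht : t ≠ 0) :
    Summable (fun n : ℤ => ∑' k : ℕ, (-1)^k * w^k * genPoch c ρ (2*(k:ℂ) + (n:ℂ)) * t^(n:ℤ) /
      ((k.factorial : ℂ) * Complex.Gamma ((n:ℂ) + (k:ℂ) + 1) *
        Complex.Gamma ((n:ℂ) + 2*(k:ℂ) + 1))) ∧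
    (∑' n : ℤ, ∑' k : ℕ, (-1)^k * w^k * genPoch c ρ (2*(k:ℂ) + (n:ℂ)) * t^(n:ℤ) /
      ((k.factorial : ℂ) * Complex.Gamma ((n:ℂ) + (k:ℂ) + 1) *
        Complex.Gamma ((n:ℂ) + 2*(k:ℂ) + 1))) =
      ∑' m : ℕ, genPoch c ρ (m:ℂ) * (t - w/t)^m / ((m.factorial : ℂ))^2 := by
  set A : ℤ × ℕ → ℂ := fun p => (-1)^p.2 * w^p.2 * genPoch c ρ (2*(p.2:ℂ) + (p.1:ℂ)) * t^(p.1:ℤ) /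
      ((p.2.factorial : ℂ) * Complex.Gamma ((p.1:ℂ) + (p.2:ℂ) + 1) *
        Complex.Gamma ((p.1:ℂ) + 2*(p.2:ℂ) + 1)) with hA
  set C : ℤ × ℕ → ℂ := fun p => (-1)^p.2 * w^p.2 * genPoch c ρ (p.1:ℂ) * t^(p.1 - 2*(p.2:ℤ)) /
      ((p.2.factorial : ℂ) * Complex.Gamma ((p.1:ℂ) - (p.2:ℂ) + 1) *
        Complex.Gamma ((p.1:ℂ) + 1)) with hC
  let e : (ℤ × ℕ) ≃ (ℤ × ℕ) :=
    { toFun := fun p => (p.1 - 2*(p.2:ℤ), p.2)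
      invFun := fun p => (p.1 + 2*(p.2:ℤ), p.2)
      left_inv := fun p => by ext <;> simp <;> ring
      right_inv := fun p => by ext <;> simp <;> ring }
  have hAe : ∀ p : ℤ × ℕ, A (e p) = C p := by
    intro ⟨m, k⟩
    show A (m - 2*(k:ℤ), k) = C (m, k)
    rw [hA, hC]
    have c1 : (2*(k:ℂ) + ((m - 2*(k:ℤ) : ℤ):ℂ)) = (m:ℂ) := by push_cast; ring
    have c2 : (((m - 2*(k:ℤ) : ℤ):ℂ) + (k:ℂ) + 1) = (m:ℂ) - (k:ℂ) + 1 := by push_cast; ring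
    have c3 : (((m - 2*(k:ℤ) : ℤ):ℂ) + 2*(k:ℂ) + 1) = (m:ℂ) + 1 := by push_cast; ring
    simp only [c1, c2, c3]
  -- vanishing
  have hCzero : ∀ (m : ℤ) (k : ℕ), (m < 0 ∨ m < (k:ℤ)) → C (m, k) = 0 := by
    intro m k hmk
    rw [hC]
    rcases lt_or_ge m 0 with hm | hm
    · simp only
      rw [my_gamma_int_neg hm, mul_zero, div_zero]
    · have hk : m < (k:ℤ) := by omega
      simp only
      rw [my_gamma_sub_neg hm hk, mul_zero, zero_mul, div_zero]
  -- value at (M,k), k ≤ M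
  have hCval : ∀ (M k : ℕ), k ≤ M → C (((M:ℕ):ℤ), k) =
      genPoch c ρ (M:ℂ) * ((M.choose k : ℂ) * (-w)^k * t^((M:ℤ) - 2*(k:ℤ))) /
        ((M.factorial : ℂ))^2 := by
    intro M k hk
    rw [hC]
    simp only
    have g1 : Complex.Gamma ((((M:ℕ):ℤ):ℂ) - (k:ℂ) + 1) = ((M-k).factorial : ℂ) := by
      have h1 : (((M:ℕ):ℤ):ℂ) - (k:ℂ) + 1 = (((M - k : ℕ)):ℂ) + 1 := by
        push_cast [Nat.cast_sub hk]; ring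
      rw [h1, Complex.Gamma_nat_eq_factorial]
    have g2 : Complex.Gamma ((((M:ℕ):ℤ):ℂ) + 1) = (M.factorial : ℂ) := by
      have h1 : (((M:ℕ):ℤ):ℂ) + 1 = ((M:ℕ):ℂ) + 1 := by push_cast; ring
      rw [h1, Complex.Gamma_nat_eq_factorial]
    rw [g1, g2]
    have hfac : (M.choose k : ℂ) * (k.factorial : ℂ) * ((M-k).factorial : ℂ)
        = (M.factorial : ℂ) := by
      exact_mod_cast congrArg (fun n : ℕ => (n:ℂ)) (Nat.choose_mul_factorial_mul_factorial hk)
    have hsq : ((M.factorial : ℂ))^2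
        = (M.choose k : ℂ) * (k.factorial : ℂ) * ((M-k).factorial : ℂ) * (M.factorial : ℂ) := by
      rw [hfac, sq]
    have hch : ((M:ℤ):ℂ) = (M:ℂ) := by push_cast; ring
    rw [hsq, hch, neg_pow w k]
    have hk0 : (k.factorial : ℂ) ≠ 0 := Nat.cast_ne_zero.2 k.factorial_ne_zero
    have hmk0 : ((M-k).factorial : ℂ) ≠ 0 := Nat.cast_ne_zero.2 (M-k).factorial_ne_zero
    have hM0 : (M.factorial : ℂ) ≠ 0 := Nat.cast_ne_zero.2 M.factorial_ne_zero
    have hc0 : (M.choose k : ℂ) ≠ 0 := Nat.cast_ne_zero.2 (Nat.choose_pos hk).ne'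
    field_simp
  set T : ℝ := max ‖t‖ ‖t‖⁻¹ with hT
  have ht0 : (0:ℝ) < ‖t‖ := norm_pos_iff.2 ht
  have hT1 : (1:ℝ) ≤ T := by
    rcases le_total 1 ‖t‖ with h | h
    · exact le_trans h (le_max_left _ _)
    · exact le_trans ((one_le_inv₀ ht0).2 h) (le_max_right _ _)
  set S : ℝ := T * (1 + ‖w‖) with hS
  have hS0 : (0:ℝ) ≤ S := by
    have : (0:ℝ) ≤ T := le_trans zero_le_one hT1
    positivity
  have hinner : ∀ m : ℤ, Summable (fun k => ‖C (m, k)‖) := by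
    intro m
    apply summable_of_ne_finset_zero (s := Finset.range (m.toNat + 1))
    intro k hk
    rw [hCzero m k (by simp only [Finset.mem_range, not_lt] at hk; omega), norm_zero]
  -- bound on fiber sums
  have hgbound : ∀ M : ℕ, (∑' k : ℕ, ‖C (((M:ℕ):ℤ), k)‖) ≤
      ‖genPoch c ρ (M:ℂ)‖ * S^M / ((M.factorial:ℝ))^2 := by
    intro M
    rw [tsum_eq_sum (s := Finset.range (M+1)) (fun k hk => by
      rw [hCzero M k (Or.inr (by simp only [Finset.mem_range, not_lt] at hk; omega)), norm_zero])]
    have hterm : ∀ k ∈ Finset.range (M+1), ‖C (((M:ℕ):ℤ), k)‖ ≤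
        ‖genPoch c ρ (M:ℂ)‖ * ((M.choose k : ℝ) * ‖w‖^k * T^M) / ((M.factorial:ℝ))^2 := by
      intro k hk
      have hkM : k ≤ M := Nat.lt_succ_iff.1 (Finset.mem_range.1 hk)
      rw [hCval M k hkM]
      rw [norm_div, norm_mul, norm_mul, norm_mul, norm_pow, norm_neg, norm_zpow, norm_pow]
      simp only [Complex.norm_natCast]
      have hzp : ‖t‖ ^ ((M:ℤ) - 2*(k:ℤ)) ≤ T ^ M :=
        my_zpow_le ht0 (by omega) (by omega)
      rw [div_le_div_iff_of_pos_right (by positivity)]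
      have h1 : (0:ℝ) ≤ ‖genPoch c ρ (M:ℂ)‖ * ((M.choose k : ℝ) * ‖w‖^k) := by positivity
      calc ‖genPoch c ρ (M:ℂ)‖ * ((M.choose k : ℝ) * ‖w‖^k * ‖t‖^((M:ℤ) - 2*(k:ℤ)))
          = ‖genPoch c ρ (M:ℂ)‖ * ((M.choose k : ℝ) * ‖w‖^k) * ‖t‖^((M:ℤ) - 2*(k:ℤ)) := by ring
        _ ≤ ‖genPoch c ρ (M:ℂ)‖ * ((M.choose k : ℝ) * ‖w‖^k) * T^M :=
            mul_le_mul_of_nonneg_left hzp h1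
        _ = ‖genPoch c ρ (M:ℂ)‖ * ((M.choose k : ℝ) * ‖w‖^k * T^M) := by ring
    have hbin : ∑ k ∈ Finset.range (M+1), (M.choose k : ℝ) * ‖w‖^k = (1 + ‖w‖)^M := by
      have h := add_pow ‖w‖ (1:ℝ) M
      simp only [one_pow, mul_one] at h
      rw [add_comm (1:ℝ) ‖w‖, h]
      exact Finset.sum_congr rfl fun k hk => by ring
    calc ∑ k ∈ Finset.range (M+1), ‖C (((M:ℕ):ℤ), k)‖
        ≤ ∑ k ∈ Finset.range (M+1),
            ‖genPoch c ρ (M:ℂ)‖ * ((M.choose k : ℝ) * ‖w‖^k * T^M) / ((M.factorial:ℝ))^2 :=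
          Finset.sum_le_sum hterm
      _ = ‖genPoch c ρ (M:ℂ)‖ * S^M / ((M.factorial:ℝ))^2 := by
          rw [← Finset.sum_div]
          congr 1
          calc ∑ k ∈ Finset.range (M+1), ‖genPoch c ρ (M:ℂ)‖ * ((M.choose k : ℝ) * ‖w‖^k * T^M)
              = ‖genPoch c ρ (M:ℂ)‖ * T^M * ∑ k ∈ Finset.range (M+1), (M.choose k : ℝ) * ‖w‖^k := by
                rw [Finset.mul_sum]
                exact Finset.sum_congr rfl fun k hk => by ring
            _ = ‖genPoch c ρ (M:ℂ)‖ * S^M := by rw [hbin, hS, mul_pow]; ring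
  have hgzero : ∀ m : ℤ, m < 0 → (∑' k : ℕ, ‖C (m,k)‖) = 0 := by
    intro m hm
    have h : ∀ k : ℕ, ‖C (m,k)‖ = 0 := fun k => by rw [hCzero m k (Or.inl hm), norm_zero]
    simp only [h, tsum_zero]
  have hGc0 : (0:ℝ) ≤ ‖Complex.Gamma c‖ := norm_nonneg _
  have hMsum : Summable (fun M : ℕ => ∑' k : ℕ, ‖C (((M:ℕ):ℤ), k)‖) := by
    set M₀ : ℕ := ⌈|c.re|⌉₊ + 1 with hM₀
    rw [← summable_nat_add_iff M₀]
    have hF : Summable (fun M : ℕ =>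
        Real.Gamma (c.re + M) * S^M / ((M.factorial:ℝ))^2 * (1/‖Complex.Gamma c‖)) :=
      (my_summable_gamma c.re hS0).mul_right _
    have hFs : Summable (fun M : ℕ =>
        Real.Gamma (c.re + ((M + M₀ : ℕ):ℝ)) * S^(M+M₀) / (((M+M₀).factorial:ℝ))^2 *
          (1/‖Complex.Gamma c‖)) := (summable_nat_add_iff M₀).2 hF
    refine Summable.of_nonneg_of_le (fun M => tsum_nonneg fun k => norm_nonneg _)
      (fun M => ?_) hFs
    have hpos : 0 < c.re + (M + M₀ : ℕ) := by
      have h1 : |c.re| ≤ (⌈|c.re|⌉₊ : ℝ) := Nat.le_ceil _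
      have h2 : (M₀:ℝ) = (⌈|c.re|⌉₊ : ℝ) + 1 := by rw [hM₀]; push_cast; ring
      have h3 : (M₀:ℝ) ≤ ((M + M₀ : ℕ):ℝ) := by exact_mod_cast Nat.le_add_left M₀ M
      have := abs_le.1 h1
      push_cast at h3 ⊢
      nlinarith [abs_nonneg c.re, neg_abs_le c.re]
    calc (∑' k : ℕ, ‖C ((((M + M₀:ℕ)):ℤ), k)‖)
        ≤ ‖genPoch c ρ ((M + M₀ : ℕ):ℂ)‖ * S^(M+M₀) / (((M+M₀).factorial:ℝ))^2 :=
          hgbound (M + M₀)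
      _ ≤ (Real.Gamma (c.re + (M + M₀:ℕ)) / ‖Complex.Gamma c‖) * S^(M+M₀) /
            (((M+M₀).factorial:ℝ))^2 := by
          have := my_genPoch_norm_le (c := c) hρ (M := M + M₀) hpos
          gcongr
      _ = Real.Gamma (c.re + ((M + M₀ : ℕ):ℝ)) * S^(M+M₀) / (((M+M₀).factorial:ℝ))^2 *
            (1/‖Complex.Gamma c‖) := by ring
  have houter : Summable (fun m : ℤ => ∑' k : ℕ, ‖C (m, k)‖) := by
    apply Summable.of_nat_of_neg_add_one hMsum
    apply summable_of_ne_finset_zero (s := (∅ : Finset ℕ))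
    intro n _
    exact hgzero (-((n:ℤ)+1)) (by omega)
  have hNsum : Summable (fun p : ℤ × ℕ => ‖C p‖) := by
    rw [summable_prod_of_nonneg (fun p => norm_nonneg _)]
    exact ⟨hinner, houter⟩
  have hCsum : Summable C := Summable.of_norm hNsum
  have hAsum : Summable A := e.summable_iff.1 ((summable_congr hAe).2 hCsum)
  have hAfib : ∀ n : ℤ, Summable fun k : ℕ => A (n, k) := fun n => hAsum.prod_factor n
  have hout : HasSum (fun n : ℤ => ∑' k : ℕ, A (n, k)) (∑' p : ℤ × ℕ, A p) :=
    hAsum.hasSum.prod_fiberwise (fun n => (hAfib n).hasSum)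
  constructor
  · exact hout.summable
  · -- the sum identity
    have h1 : (∑' n : ℤ, ∑' k : ℕ, A (n, k)) = ∑' p : ℤ × ℕ, A p := hout.tsum_eq
    have h2 : (∑' p : ℤ × ℕ, A p) = ∑' p : ℤ × ℕ, C p := by
      rw [← e.tsum_eq A]
      exact tsum_congr hAe
    have h3 : (∑' p : ℤ × ℕ, C p) = ∑' m : ℤ, ∑' k : ℕ, C (m, k) :=
      Summable.tsum_prod' hCsum (fun m => hCsum.prod_factor m)
    have h4 : (∑' m : ℤ, ∑' k : ℕ, C (m, k)) = ∑' M : ℕ, ∑' k : ℕ, C (((M:ℕ):ℤ), k) := by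
      refine (Function.Injective.tsum_eq (g := fun M : ℕ => ((M:ℕ):ℤ))
        Nat.cast_injective ?_).symm
      intro m hm
      rcases lt_or_ge m 0 with h | h
      · exfalso
        apply hm
        have hz : ∀ k : ℕ, C (m, k) = 0 := fun k => hCzero m k (Or.inl h)
        simp only [Function.mem_support] at *
        simp [hz]
      · exact ⟨m.toNat, by simp [Int.toNat_of_nonneg h]⟩
    have h5 : ∀ M : ℕ, (∑' k : ℕ, C (((M:ℕ):ℤ), k)) =
        genPoch c ρ (M:ℂ) * (t - w/t)^M / ((M.factorial : ℂ))^2 := by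
      intro M
      rw [tsum_eq_sum (s := Finset.range (M+1)) (fun k hk => by
        exact hCzero M k (Or.inr (by simp only [Finset.mem_range, not_lt] at hk; omega)))]
      have := my_binom (-w) ht M
      rw [neg_div, ← sub_eq_add_neg] at this
      calc ∑ k ∈ Finset.range (M+1), C (((M:ℕ):ℤ), k)
          = ∑ k ∈ Finset.range (M+1), genPoch c ρ (M:ℂ) *
              ((M.choose k : ℂ) * (-w)^k * t^((M:ℤ) - 2*(k:ℤ))) / ((M.factorial : ℂ))^2 :=
            Finset.sum_congr rfl fun k hk => hCval M k (Nat.lt_succ_iff.1 (Finset.mem_range.1 hk))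
        _ = genPoch c ρ (M:ℂ) * (t - w/t)^M / ((M.factorial : ℂ))^2 := by
            rw [← Finset.sum_div, ← Finset.mul_sum, this]
    rw [h1, h2, h3, h4]
    exact tsum_congr h5

lemma my_cpow_split {x : ℂ} (hx : x ≠ 0) (k : ℕ) (n : ℤ) :
    x^(2*(k:ℂ)+(n:ℂ)) = (x^2)^k * x^(n:ℤ) := by
  have h1 : (2*(k:ℂ)+(n:ℂ)) = (((2*(k:ℤ)+n : ℤ)):ℂ) := by push_cast; ring
  rw [h1, Complex.cpow_intCast, zpow_add₀ hx]
  congr 1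
  rw [zpow_mul, zpow_natCast, zpow_two, sq]

lemma my_cpow_clifford {z : ℝ} (hz : 0 < z) (k : ℕ) (n : ℤ) :
    (z:ℂ)^(-(n:ℂ)/2) * ((Real.sqrt z : ℝ):ℂ)^(2*(k:ℂ)+(n:ℂ)) = (z:ℂ)^k := by
  have hz0 : (z:ℂ) ≠ 0 := by exact_mod_cast hz.ne'
  have hs : (0:ℝ) < Real.sqrt z := Real.sqrt_pos.2 hz
  have hs0 : ((Real.sqrt z : ℝ):ℂ) ≠ 0 := by exact_mod_cast hs.ne'
  rw [Complex.cpow_def_of_ne_zero hz0, Complex.cpow_def_of_ne_zero hs0, ← Complex.exp_add,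
    ← Complex.ofReal_log hz.le, ← Complex.ofReal_log hs.le, Real.log_sqrt hz.le]
  have h2 : (↑(Real.log z) * (-(n:ℂ)/2) + ↑(Real.log z / 2) * (2*(k:ℂ)+(n:ℂ)))
      = ↑(Real.log z) * ((k:ℕ):ℂ) := by push_cast; ring
  rw [h2, Complex.ofReal_log hz.le, ← Complex.cpow_def_of_ne_zero hz0, Complex.cpow_natCast]

theorem stmt18 (b c lam ρ : ℂ) (hρ : 0 < ρ.re) (z : ℝ) (hz : 0 < z)
    (t : ℂ) (ht : t ≠ 0) :
    (Summable (fun n : ℤ => sphG b (c + 1/2) ((n:ℂ) - 1/2) ρ z * t ^ n) ∧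
      ∑' n : ℤ, sphG b (c + 1/2) ((n:ℂ) - 1/2) ρ z * t ^ n =
        (Real.sqrt (π / (2 * z)) : ℂ) *
          ∑' m : ℕ, genPoch c ρ (m:ℂ) * ((t - b / t) * (z:ℂ) / 2) ^ m / (m.factorial : ℂ) ^ 2) ∧
    (Summable (fun n : ℤ => cliffC b lam (n:ℂ) ρ z * t ^ n) ∧
      ∑' n : ℤ, cliffC b lam (n:ℂ) ρ z * t ^ n =
        ∑' m : ℕ, genPoch lam ρ (m:ℂ) * (t - b * (z:ℂ) / t) ^ m / (m.factorial : ℂ) ^ 2) := by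
  have hz0 : (z:ℂ) ≠ 0 := by exact_mod_cast hz.ne'
  have hx0 : (z:ℂ)/2 ≠ 0 := by
    simp only [div_ne_zero_iff]
    exact ⟨hz0, two_ne_zero⟩
  have ht1 : (z:ℂ)/2 * t ≠ 0 := mul_ne_zero hx0 ht
  obtain ⟨ssum1, seq1⟩ := my_core c ρ hρ (b * ((z:ℂ)/2)^2) ((z:ℂ)/2 * t) ht1
  obtain ⟨ssum2, seq2⟩ := my_core lam ρ hρ (b * (z:ℂ)) t ht
  have e1 : c + 1/2 - 1/2 = c := by ring
  have hn1 : ∀ n : ℤ, sphG b (c + 1/2) ((n:ℂ) - 1/2) ρ z * t^n =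
      (Real.sqrt (π / (2 * z)) : ℂ) *
      ∑' k : ℕ, (-1)^k * (b * ((z:ℂ)/2)^2)^k * genPoch c ρ (2*(k:ℂ) + (n:ℂ)) *
          ((z:ℂ)/2 * t)^(n:ℤ) /
        ((k.factorial : ℂ) * Complex.Gamma ((n:ℂ) + (k:ℂ) + 1) *
          Complex.Gamma ((n:ℂ) + 2*(k:ℂ) + 1)) := by
    intro n
    have e2 : (n:ℂ) - 1/2 + 1/2 = (n:ℂ) := by ring
    rw [sphG, e1, e2, unifiedG, mul_assoc, ← tsum_mul_right]
    congr 1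
    refine tsum_congr fun k => ?_
    rw [my_cpow_split hx0 k n, mul_zpow]
    ring
  have hn2 : ∀ n : ℤ, cliffC b lam (n:ℂ) ρ z * t^n =
      ∑' k : ℕ, (-1)^k * (b * (z:ℂ))^k * genPoch lam ρ (2*(k:ℂ) + (n:ℂ)) * t^(n:ℤ) /
        ((k.factorial : ℂ) * Complex.Gamma ((n:ℂ) + (k:ℂ) + 1) *
          Complex.Gamma ((n:ℂ) + 2*(k:ℂ) + 1)) := by
    intro n
    rw [cliffC, unifiedG, ← tsum_mul_left, ← tsum_mul_right]
    refine tsum_congr fun k => ?_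
    have hB : (((2 * Real.sqrt z : ℝ)):ℂ)/2 = ((Real.sqrt z : ℝ):ℂ) := by push_cast; ring
    have hkey := my_cpow_clifford hz k n
    calc (z:ℂ)^(-(n:ℂ)/2) * ((-b)^k * genPoch lam ρ (2*(k:ℂ)+(n:ℂ)) *
            ((((2*Real.sqrt z:ℝ)):ℂ)/2)^(2*(k:ℂ)+(n:ℂ)) /
          ((k.factorial : ℂ) * Complex.Gamma ((n:ℂ) + (k:ℂ) + 1) *
            Complex.Gamma ((n:ℂ) + 2*(k:ℂ) + 1))) * t^n
        = ((z:ℂ)^(-(n:ℂ)/2) * ((Real.sqrt z:ℝ):ℂ)^(2*(k:ℂ)+(n:ℂ))) *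
            ((-b)^k * genPoch lam ρ (2*(k:ℂ)+(n:ℂ)) * t^(n:ℤ)) /
          ((k.factorial : ℂ) * Complex.Gamma ((n:ℂ) + (k:ℂ) + 1) *
            Complex.Gamma ((n:ℂ) + 2*(k:ℂ) + 1)) := by rw [hB]; ring
      _ = (z:ℂ)^k * ((-b)^k * genPoch lam ρ (2*(k:ℂ)+(n:ℂ)) * t^(n:ℤ)) /
          ((k.factorial : ℂ) * Complex.Gamma ((n:ℂ) + (k:ℂ) + 1) *
            Complex.Gamma ((n:ℂ) + 2*(k:ℂ) + 1)) := by rw [hkey]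
      _ = (-1)^k * (b * (z:ℂ))^k * genPoch lam ρ (2*(k:ℂ) + (n:ℂ)) * t^(n:ℤ) /
        ((k.factorial : ℂ) * Complex.Gamma ((n:ℂ) + (k:ℂ) + 1) *
          Complex.Gamma ((n:ℂ) + 2*(k:ℂ) + 1)) := by ring
  refine ⟨⟨?_, ?_⟩, ?_, ?_⟩
  · exact (summable_congr hn1).2 (ssum1.mul_left _)
  · rw [tsum_congr hn1, tsum_mul_left, seq1]
    congr 1
    refine tsum_congr fun M => ?_
    have hb : (z:ℂ)/2 * t - b * ((z:ℂ)/2)^2 / ((z:ℂ)/2 * t) = (t - b/t) * (z:ℂ)/2 := by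
      field_simp
    rw [hb]
  · exact (summable_congr hn2).2 ssum2
  · rw [tsum_congr hn2, seq2]
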